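/- In Rocco's group $\nu(G)$ of a group $G$: (a) $[g,g^\phi]=1$ for all $g \in G'$; (b) $[g,g^\phi]$ is central in $\nu(G)$ for all $g \in G$; (c) $[g_1,g_2^\phi][g_2,g_1^\phi]$ is central in $\nu(G)$ for all $g_1,g_2 \in G$; (d) if $[g_1,g_2]=1$ in $G$ then $[g_1^n, g_2^\phi] = [g_1,g_2^\phi]^n = [g_1,(g_2^\phi)^n]$ for all integers $n$. -/

import Mathlib

open scoped commutatorElement

/-- Relators of Rocco's group `ν(G)`: the multiplication tables of the two copies of
`G` (generated by `Sum.inl g` and `Sum.inr g = g^φ`), together with the relations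
`[g₁, g₂^φ]^{g₃} = [g₁^{g₃}, (g₂^{g₃})^φ] = [g₁, g₂^φ]^{g₃^φ}`. -/
def nuRels (G : Type*) [Group G] : Set (FreeGroup (G ⊕ G)) :=
  {r | ∃ g h : G, r = FreeGroup.of (Sum.inl g) * FreeGroup.of (Sum.inl h) *
      (FreeGroup.of (Sum.inl (g * h)))⁻¹} ∪
  {r | ∃ g h : G, r = FreeGroup.of (Sum.inr g) * FreeGroup.of (Sum.inr h) *
      (FreeGroup.of (Sum.inr (g * h)))⁻¹} ∪
  {r | ∃ g₁ g₂ g₃ : G,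
      r = ((FreeGroup.of (Sum.inl g₃))⁻¹ *
            ⁅FreeGroup.of (Sum.inl g₁ : G ⊕ G), FreeGroup.of (Sum.inr g₂)⁆ *
            FreeGroup.of (Sum.inl g₃))⁻¹ *
          ⁅FreeGroup.of (Sum.inl (g₃⁻¹ * g₁ * g₃) : G ⊕ G),
            FreeGroup.of (Sum.inr (g₃⁻¹ * g₂ * g₃))⁆} ∪
  {r | ∃ g₁ g₂ g₃ : G,
      r = ((FreeGroup.of (Sum.inr g₃))⁻¹ *
            ⁅FreeGroup.of (Sum.inl g₁ : G ⊕ G), FreeGroup.of (Sum.inr g₂)⁆ *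
            FreeGroup.of (Sum.inr g₃))⁻¹ *
          ⁅FreeGroup.of (Sum.inl (g₃⁻¹ * g₁ * g₃) : G ⊕ G),
            FreeGroup.of (Sum.inr (g₃⁻¹ * g₂ * g₃))⁆}

/-- Rocco's group `ν(G)`. -/
def Nu (G : Type*) [Group G] : Type _ := PresentedGroup (nuRels G)

instance (G : Type*) [Group G] : Group (Nu G) := by unfold Nu; infer_instance

/-- The first copy of `G` inside `ν(G)`. -/
def nuL {G : Type*} [Group G] (g : G) : Nu G := PresentedGroup.of (Sum.inl g)

/-- The second copy `G^φ` inside `ν(G)`. -/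
def nuR {G : Type*} [Group G] (g : G) : Nu G := PresentedGroup.of (Sum.inr g)

namespace NuAux

variable {G : Type*} [Group G]

/-- The projection from the free group. -/
def piF : FreeGroup (G ⊕ G) →* Nu G := PresentedGroup.mk (nuRels G)

lemma relOne {r : FreeGroup (G ⊕ G)} (hr : r ∈ nuRels G) : (piF r : Nu G) = 1 := by
  have : r ∈ Subgroup.normalClosure (nuRels G) := Subgroup.subset_normalClosure hr
  exact (QuotientGroup.eq_one_iff r).mpr this

lemma piF_inl (g : G) : piF (FreeGroup.of (Sum.inl g)) = nuL g := rfl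
lemma piF_inr (g : G) : piF (FreeGroup.of (Sum.inr g)) = nuR g := rfl

lemma mulL (g h : G) : nuL g * nuL h = nuL (g * h) := by
  have h1 := relOne (G := G) (Or.inl (Or.inl (Or.inl ⟨g, h, rfl⟩)))
  rw [map_mul, map_mul, map_inv, piF_inl, piF_inl, piF_inl, mul_inv_eq_one] at h1
  exact h1

lemma mulR (g h : G) : nuR g * nuR h = nuR (g * h) := by
  have h1 := relOne (G := G) (Or.inl (Or.inl (Or.inr ⟨g, h, rfl⟩)))
  rw [map_mul, map_mul, map_inv, piF_inr, piF_inr, piF_inr, mul_inv_eq_one] at h1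
  exact h1

lemma conjL (g h k : G) :
    (nuL k)⁻¹ * ⁅nuL g, nuR h⁆ * nuL k = ⁅nuL (k⁻¹ * g * k), nuR (k⁻¹ * h * k)⁆ := by
  have h1 := relOne (G := G) (Or.inl (Or.inr ⟨g, h, k, rfl⟩))
  simp only [map_mul, map_inv, map_commutatorElement, piF_inl, piF_inr] at h1
  rw [inv_mul_eq_one] at h1
  exact h1

lemma conjR (g h k : G) :
    (nuR k)⁻¹ * ⁅nuL g, nuR h⁆ * nuR k = ⁅nuL (k⁻¹ * g * k), nuR (k⁻¹ * h * k)⁆ := by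
  have h1 := relOne (G := G) (Or.inr ⟨g, h, k, rfl⟩)
  simp only [map_mul, map_inv, map_commutatorElement, piF_inl, piF_inr] at h1
  rw [inv_mul_eq_one] at h1
  exact h1

lemma oneL : (nuL (1 : G)) = 1 := by
  have := mulL (1 : G) 1
  rw [mul_one] at this
  exact mul_eq_left.mp this

lemma oneR : (nuR (1 : G)) = 1 := by
  have := mulR (1 : G) 1
  rw [mul_one] at this
  exact mul_eq_left.mp this

lemma invL (g : G) : (nuL g)⁻¹ = nuL g⁻¹ := by
  have h := mulL g g⁻¹
  rw [mul_inv_cancel, oneL] at h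
  exact inv_eq_of_mul_eq_one_right h

lemma invR (g : G) : (nuR g)⁻¹ = nuR g⁻¹ := by
  have h := mulR g g⁻¹
  rw [mul_inv_cancel, oneR] at h
  exact inv_eq_of_mul_eq_one_right h

/-- congruence helper -/
lemma ccongr {u v u' v' : G} (h1 : u = u') (h2 : v = v') :
    ⁅nuL u, nuR v⁆ = ⁅nuL u', nuR v'⁆ := by rw [h1, h2]

/-- conjugation sandwich, positive form -/
lemma sandL (k g h : G) :
    (nuL k)⁻¹ * ⁅nuL g, nuR h⁆ * nuL k = ⁅nuL (k⁻¹ * g * k), nuR (k⁻¹ * h * k)⁆ :=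
  conjL g h k

lemma sandL' (k g h : G) :
    nuL k * ⁅nuL g, nuR h⁆ * (nuL k)⁻¹ = ⁅nuL (k * g * k⁻¹), nuR (k * h * k⁻¹)⁆ := by
  have := conjL g h k⁻¹
  rw [invL, inv_inv] at this
  rw [invL]
  exact this.trans (ccongr (by group) (by group))

lemma sandR (k g h : G) :
    (nuR k)⁻¹ * ⁅nuL g, nuR h⁆ * nuR k = ⁅nuL (k⁻¹ * g * k), nuR (k⁻¹ * h * k)⁆ :=
  conjR g h k

lemma sandR' (k g h : G) :
    nuR k * ⁅nuL g, nuR h⁆ * (nuR k)⁻¹ = ⁅nuL (k * g * k⁻¹), nuR (k * h * k⁻¹)⁆ := by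
  have := conjR g h k⁻¹
  rw [invR, inv_inv] at this
  rw [invR]
  exact this.trans (ccongr (by group) (by group))

lemma cOneFst (h : G) : ⁅nuL (1 : G), nuR h⁆ = 1 := by
  rw [oneL, commutatorElement_one_left]

lemma cOneSnd (g : G) : ⁅nuL g, nuR (1 : G)⁆ = 1 := by
  rw [oneR, commutatorElement_one_right]

/-- left-slot expansion:  c(ab, k) = c(b,k)^{conj by a on left} * c(a,k) -/
lemma expandL (a b k : G) :
    ⁅nuL (a * b), nuR k⁆ =
      ⁅nuL (a * b * a⁻¹), nuR (a * k * a⁻¹)⁆ * ⁅nuL a, nuR k⁆ := by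
  have h1 : ⁅nuL (a * b * a⁻¹), nuR (a * k * a⁻¹)⁆
      = nuL a * ⁅nuL b, nuR k⁆ * (nuL a)⁻¹ := (sandL' a b k).symm.trans (by rfl)
  rw [h1, ← mulL]
  simp only [commutatorElement_def]
  group

/-- right-slot expansion: c(g, ab) = c(g,a) * c(g,b)^{conj by a} -/
lemma expandR (g a b : G) :
    ⁅nuL g, nuR (a * b)⁆ =
      ⁅nuL g, nuR a⁆ * ⁅nuL (a * g * a⁻¹), nuR (a * b * a⁻¹)⁆ := by
  have h1 : ⁅nuL (a * g * a⁻¹), nuR (a * b * a⁻¹)⁆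
      = nuR a * ⁅nuL g, nuR b⁆ * (nuR a)⁻¹ := (sandR' a g b).symm
  rw [h1, ← mulR]
  simp only [commutatorElement_def]
  group

/-- reversed right-slot expansion:
`c(g, u*v) = (c(g*u*g⁻¹*u⁻¹*g⁻¹, g*u*v*u⁻¹*g⁻¹))⁻¹ * c(g, u)`. -/
lemma expandRrev (g u v : G) :
    ⁅nuL g, nuR (u * v)⁆ =
      (⁅nuL (g * u * g⁻¹ * u⁻¹ * g⁻¹), nuR (g * u * v * u⁻¹ * g⁻¹)⁆)⁻¹ *
        ⁅nuL g, nuR u⁆ := by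
  have h1 : ⁅nuL (g * u * g⁻¹ * u⁻¹ * g⁻¹), nuR (g * u * v * u⁻¹ * g⁻¹)⁆
      = nuL g * (nuR u * ⁅nuL g⁻¹, nuR v⁆ * (nuR u)⁻¹) * (nuL g)⁻¹ := by
    rw [sandR' u g⁻¹ v, sandL' g]
    exact ccongr (by group) (by group)
  rw [h1, ← invL, ← mulR]
  simp only [commutatorElement_def]
  group

/-- c(a⁻¹, a z a⁻¹) = c(a, z)⁻¹ -/
lemma invFst (a z : G) :
    ⁅nuL a⁻¹, nuR (a * z * a⁻¹)⁆ = (⁅nuL a, nuR z⁆)⁻¹ := by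
  have h1 := expandL a a⁻¹ z
  have e1 : a * a⁻¹ = (1 : G) := by group
  rw [e1, cOneFst, one_mul] at h1
  exact eq_inv_of_mul_eq_one_left h1.symm

/-- Rocco's (i): conjugation by `c(a,b)` acts on the `c`'s as conjugation by `⁅a,b⁆`. -/
lemma conjC (a b u v : G) :
    (⁅nuL a, nuR b⁆)⁻¹ * ⁅nuL u, nuR v⁆ * ⁅nuL a, nuR b⁆ =
      ⁅nuL ((a*b*a⁻¹*b⁻¹)⁻¹ * u * (a*b*a⁻¹*b⁻¹)),
        nuR ((a*b*a⁻¹*b⁻¹)⁻¹ * v * (a*b*a⁻¹*b⁻¹))⁆ := by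
  have key : (⁅nuL a, nuR b⁆)⁻¹ * ⁅nuL u, nuR v⁆ * ⁅nuL a, nuR b⁆
      = nuR b * (nuL a * ((nuR b)⁻¹ * ((nuL a)⁻¹ * ⁅nuL u, nuR v⁆ * nuL a) * nuR b) *
          (nuL a)⁻¹) * (nuR b)⁻¹ := by
    simp only [commutatorElement_def]
    group
  rw [key, sandL a, sandR b, sandL' a, sandR' b]
  exact ccongr (by group) (by group)

/-- The key identity (Rocco): `⁅[g,h^φ], k⁆ = ⁅[g,h], k^φ⁆`. -/
lemma keyP (g h k : G) :
    ⁅⁅nuL g, nuR h⁆, nuL k⁆ = ⁅nuL (g * h * g⁻¹ * h⁻¹), nuR k⁆ := by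
  have hA : ⁅nuL (g * h * g⁻¹ * h⁻¹), nuR k⁆
      = ⁅nuL (g * h * g⁻¹ * h⁻¹ * g⁻¹), nuR (g * k * g⁻¹)⁆ * ⁅nuL g, nuR k⁆ := by
    have h0 := expandL g (h * g⁻¹ * h⁻¹) k
    rw [ccongr (show g * (h * g⁻¹ * h⁻¹) = g * h * g⁻¹ * h⁻¹ by group) rfl,
        ccongr (show g * (h * g⁻¹ * h⁻¹) * g⁻¹ = g * h * g⁻¹ * h⁻¹ * g⁻¹ by group) rfl] at h0
    exact h0
  have hB : ⁅nuL g, nuR (k * h)⁆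
      = (⁅nuL (g * h * g⁻¹ * h⁻¹ * g⁻¹), nuR (g * k * g⁻¹)⁆)⁻¹ * ⁅nuL g, nuR h⁆ := by
    have h0 := expandRrev g h (h⁻¹ * k * h)
    rw [ccongr rfl (show h * (h⁻¹ * k * h) = k * h by group),
        ccongr rfl (show g * h * (h⁻¹ * k * h) * h⁻¹ * g⁻¹ = g * k * g⁻¹ by group)] at h0
    exact h0
  have hC := expandR g k h
  have hL : ⁅⁅nuL g, nuR h⁆, nuL k⁆
      = ⁅nuL g, nuR h⁆ * (⁅nuL (k * g * k⁻¹), nuR (k * h * k⁻¹)⁆)⁻¹ := by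
    rw [← sandL' k g h]
    simp only [commutatorElement_def]
    group
  have hBC := hB.symm.trans hC
  rw [inv_mul_eq_iff_eq_mul] at hBC
  rw [hL, hA, hBC]
  group

/-- In `ν(G)`, conjugation by `k^φ` and by `k` agree on the commutators. -/
lemma commYX (u v k : G) :
    ⁅⁅nuL u, nuR v⁆, nuR k⁆ = ⁅⁅nuL u, nuR v⁆, nuL k⁆ := by
  have h1 : nuR k * ⁅nuL u, nuR v⁆ * (nuR k)⁻¹ = nuL k * ⁅nuL u, nuR v⁆ * (nuL k)⁻¹ :=
    (sandR' k u v).trans (sandL' k u v).symm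
  calc ⁅⁅nuL u, nuR v⁆, nuR k⁆
      = ⁅nuL u, nuR v⁆ * (nuR k * ⁅nuL u, nuR v⁆ * (nuR k)⁻¹)⁻¹ := by
        simp only [commutatorElement_def]; group
    _ = ⁅nuL u, nuR v⁆ * (nuL k * ⁅nuL u, nuR v⁆ * (nuL k)⁻¹)⁻¹ := by rw [h1]
    _ = ⁅⁅nuL u, nuR v⁆, nuL k⁆ := by simp only [commutatorElement_def]; group

/-- center criterion -/
lemma mem_center_of {z : Nu G} (hx : ∀ k : G, nuL k * z = z * nuL k)
    (hy : ∀ k : G, nuR k * z = z * nuR k) : z ∈ Subgroup.center (Nu G) := by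
  rw [Subgroup.mem_center_iff]
  intro u
  have key : ∀ w : FreeGroup (G ⊕ G), Commute z (piF w) := by
    intro w
    induction w using FreeGroup.induction_on with
    | C1 => rw [map_one]; exact Commute.one_right z
    | of x =>
      cases x with
      | inl g => exact (Commute.symm (hx g))
      | inr g => exact (Commute.symm (hy g))
    | inv_of x ih => rw [map_inv]; exact ih.inv_right
    | mul a b iha ihb => rw [map_mul]; exact iha.mul_right ihb
  obtain ⟨w, rfl⟩ := PresentedGroup.mk_surjective (nuRels G) u
  exact ((key w).symm).eq

/-- Part (b): `[g, g^φ]` is central. -/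
lemma kappaMemCenter (g : G) : ⁅nuL g, nuR g⁆ ∈ Subgroup.center (Nu G) := by
  have hx : ∀ k : G, nuL k * ⁅nuL g, nuR g⁆ = ⁅nuL g, nuR g⁆ * nuL k := by
    intro k
    have h0 := keyP g g k
    rw [ccongr (show g * g * g⁻¹ * g⁻¹ = (1 : G) by group) rfl, cOneFst] at h0
    exact (commutatorElement_eq_one_iff_commute.mp h0).symm.eq
  have hy : ∀ k : G, nuR k * ⁅nuL g, nuR g⁆ = ⁅nuL g, nuR g⁆ * nuR k := by
    intro k
    have h0 := keyP g g k
    rw [ccongr (show g * g * g⁻¹ * g⁻¹ = (1 : G) by group) rfl, cOneFst, ← commYX] at h0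
    exact (commutatorElement_eq_one_iff_commute.mp h0).symm.eq
  exact mem_center_of hx hy

/-- conjugate of a single `c` by `nuL k`, rewritten using `keyP`. -/
lemma sandAlt (k a b : G) :
    nuL k * ⁅nuL a, nuR b⁆ * (nuL k)⁻¹ =
      (⁅nuL (a * b * a⁻¹ * b⁻¹), nuR k⁆)⁻¹ * ⁅nuL a, nuR b⁆ := by
  rw [← keyP a b k]
  simp only [commutatorElement_def]
  group

lemma sInvarL (k a b : G) :
    nuL k * (⁅nuL a, nuR b⁆ * ⁅nuL b, nuR a⁆) * (nuL k)⁻¹ =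
      ⁅nuL a, nuR b⁆ * ⁅nuL b, nuR a⁆ := by
  have split : nuL k * (⁅nuL a, nuR b⁆ * ⁅nuL b, nuR a⁆) * (nuL k)⁻¹
      = (nuL k * ⁅nuL a, nuR b⁆ * (nuL k)⁻¹) * (nuL k * ⁅nuL b, nuR a⁆ * (nuL k)⁻¹) := by
    group
  rw [split, sandAlt k a b, sandAlt k b a]
  -- goal: (C q k)⁻¹ * C a b * ((C q' k)⁻¹ * C b a) = C a b * C b a
  -- where q = a*b*a⁻¹*b⁻¹, q' = b*a*b⁻¹*a⁻¹
  have swap : ⁅nuL a, nuR b⁆ * (⁅nuL (b * a * b⁻¹ * a⁻¹), nuR k⁆)⁻¹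
      = (⁅nuL (a * b * a⁻¹ * b⁻¹), nuR k⁆) * ⁅nuL a, nuR b⁆ := by
    -- from conjC: c(a,b)⁻¹ * c(q', qkq⁻¹) * c(a,b) = c(q', k), and
    -- invFst: c(q', q*k*q⁻¹) = (c(q,k))⁻¹  (q' = q⁻¹)
    have h1 := conjC a b (b * a * b⁻¹ * a⁻¹)
      ((a * b * a⁻¹ * b⁻¹) * k * (a * b * a⁻¹ * b⁻¹)⁻¹)
    rw [ccongr (show (a*b*a⁻¹*b⁻¹)⁻¹ * (b * a * b⁻¹ * a⁻¹) * (a*b*a⁻¹*b⁻¹)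
          = b * a * b⁻¹ * a⁻¹ by group)
        (show (a*b*a⁻¹*b⁻¹)⁻¹ * ((a * b * a⁻¹ * b⁻¹) * k * (a * b * a⁻¹ * b⁻¹)⁻¹)
            * (a*b*a⁻¹*b⁻¹) = k by group)] at h1
    have h2 : ⁅nuL (b * a * b⁻¹ * a⁻¹),
        nuR ((a * b * a⁻¹ * b⁻¹) * k * (a * b * a⁻¹ * b⁻¹)⁻¹)⁆
        = (⁅nuL (a * b * a⁻¹ * b⁻¹), nuR k⁆)⁻¹ := by
      rw [← invFst (a * b * a⁻¹ * b⁻¹) k]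
      exact ccongr (by group) rfl
    rw [h2] at h1
    -- h1 : (C a b)⁻¹ * (C q k)⁻¹ * C a b = (C q' k)
    rw [← h1]
    group
  calc (⁅nuL (a*b*a⁻¹*b⁻¹), nuR k⁆)⁻¹ * ⁅nuL a, nuR b⁆ *
        ((⁅nuL (b*a*b⁻¹*a⁻¹), nuR k⁆)⁻¹ * ⁅nuL b, nuR a⁆)
      = (⁅nuL (a*b*a⁻¹*b⁻¹), nuR k⁆)⁻¹ *
          (⁅nuL a, nuR b⁆ * (⁅nuL (b*a*b⁻¹*a⁻¹), nuR k⁆)⁻¹) * ⁅nuL b, nuR a⁆ := by group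
    _ = (⁅nuL (a*b*a⁻¹*b⁻¹), nuR k⁆)⁻¹ *
          ((⁅nuL (a*b*a⁻¹*b⁻¹), nuR k⁆) * ⁅nuL a, nuR b⁆) * ⁅nuL b, nuR a⁆ := by rw [swap]
    _ = ⁅nuL a, nuR b⁆ * ⁅nuL b, nuR a⁆ := by group

/-- Part (c): `[g₁,g₂^φ][g₂,g₁^φ]` is central. -/
lemma sMemCenter (a b : G) :
    ⁅nuL a, nuR b⁆ * ⁅nuL b, nuR a⁆ ∈ Subgroup.center (Nu G) := by
  have hx : ∀ k : G, nuL k * (⁅nuL a, nuR b⁆ * ⁅nuL b, nuR a⁆)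
      = (⁅nuL a, nuR b⁆ * ⁅nuL b, nuR a⁆) * nuL k := by
    intro k
    have := sInvarL k a b
    rw [mul_inv_eq_iff_eq_mul] at this
    exact this
  have hy : ∀ k : G, nuR k * (⁅nuL a, nuR b⁆ * ⁅nuL b, nuR a⁆)
      = (⁅nuL a, nuR b⁆ * ⁅nuL b, nuR a⁆) * nuR k := by
    intro k
    have split : nuR k * (⁅nuL a, nuR b⁆ * ⁅nuL b, nuR a⁆) * (nuR k)⁻¹
        = (nuR k * ⁅nuL a, nuR b⁆ * (nuR k)⁻¹) * (nuR k * ⁅nuL b, nuR a⁆ * (nuR k)⁻¹) := by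
      group
    rw [sandR' k a b, sandR' k b a, ← sandL' k a b, ← sandL' k b a] at split
    have split2 : (nuL k * ⁅nuL a, nuR b⁆ * (nuL k)⁻¹) * (nuL k * ⁅nuL b, nuR a⁆ * (nuL k)⁻¹)
        = nuL k * (⁅nuL a, nuR b⁆ * ⁅nuL b, nuR a⁆) * (nuL k)⁻¹ := by group
    rw [split2, sInvarL k a b] at split
    rw [mul_inv_eq_iff_eq_mul] at split
    exact split
  exact mem_center_of hx hy

lemma centerComm {z : Nu G} (hz : z ∈ Subgroup.center (Nu G)) (u : Nu G) :
    u * z = z * u := Subgroup.mem_center_iff.mp hz u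

lemma kConj (k g : G) :
    ⁅nuL (k * g * k⁻¹), nuR (k * g * k⁻¹)⁆ = ⁅nuL g, nuR g⁆ := by
  rw [← sandL' k g g, centerComm (kappaMemCenter g) (nuL k)]
  simp [mul_assoc]

lemma sConj (k a b : G) :
    ⁅nuL (k * a * k⁻¹), nuR (k * b * k⁻¹)⁆ * ⁅nuL (k * b * k⁻¹), nuR (k * a * k⁻¹)⁆ =
      ⁅nuL a, nuR b⁆ * ⁅nuL b, nuR a⁆ := by
  rw [← sandL' k a b, ← sandL' k b a]
  have h : (nuL k * ⁅nuL a, nuR b⁆ * (nuL k)⁻¹) * (nuL k * ⁅nuL b, nuR a⁆ * (nuL k)⁻¹)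
      = nuL k * (⁅nuL a, nuR b⁆ * ⁅nuL b, nuR a⁆) * (nuL k)⁻¹ := by group
  rw [h, sInvarL]

lemma kMul (a b : G) :
    ⁅nuL (a * b), nuR (a * b)⁆ =
      ⁅nuL b, nuR b⁆ * ⁅nuL a, nuR a⁆ * (⁅nuL b, nuR a⁆ * ⁅nuL a, nuR b⁆) := by
  have e1 := expandL a b (a * b)
  rw [ccongr (rfl : a * b * a⁻¹ = a * b * a⁻¹)
    (show a * (a * b) * a⁻¹ = a * (a * b * a⁻¹) by group)] at e1
  have e2 := expandR (a * b * a⁻¹) a (a * b * a⁻¹)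
  have e3 := expandR a a b
  rw [ccongr (show a * a * a⁻¹ = a by group) (rfl : a * b * a⁻¹ = a * b * a⁻¹)] at e3
  rw [e2, e3] at e1
  have e4 : ⁅nuL (a * (a * b * a⁻¹) * a⁻¹), nuR (a * (a * b * a⁻¹) * a⁻¹)⁆
      = ⁅nuL b, nuR b⁆ := by
    have h := kConj (a * a) b
    rw [ccongr (show (a*a) * b * (a*a)⁻¹ = a * (a * b * a⁻¹) * a⁻¹ by group)
      (show (a*a) * b * (a*a)⁻¹ = a * (a * b * a⁻¹) * a⁻¹ by group)] at h
    exact h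
  rw [e4] at e1
  have e5 : ⁅nuL (a * b * a⁻¹), nuR a⁆ * ⁅nuL a, nuR (a * b * a⁻¹)⁆
      = ⁅nuL b, nuR a⁆ * ⁅nuL a, nuR b⁆ := by
    have h := sConj a b a
    rw [ccongr (rfl : a * b * a⁻¹ = a * b * a⁻¹) (show a * a * a⁻¹ = a by group),
        ccongr (show a * a * a⁻¹ = a by group) (rfl : a * b * a⁻¹ = a * b * a⁻¹)] at h
    exact h
  have hz : ⁅nuL b, nuR b⁆ * ⁅nuL a, nuR a⁆ ∈ Subgroup.center (Nu G) :=
    Subgroup.mul_mem _ (kappaMemCenter b) (kappaMemCenter a)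
  calc ⁅nuL (a * b), nuR (a * b)⁆
      = ⁅nuL (a * b * a⁻¹), nuR a⁆ * (⁅nuL b, nuR b⁆ * ⁅nuL a, nuR a⁆) *
          ⁅nuL a, nuR (a * b * a⁻¹)⁆ := by rw [e1]; group
    _ = ⁅nuL b, nuR b⁆ * ⁅nuL a, nuR a⁆ * ⁅nuL (a * b * a⁻¹), nuR a⁆ *
          ⁅nuL a, nuR (a * b * a⁻¹)⁆ := by
        rw [centerComm hz (⁅nuL (a * b * a⁻¹), nuR a⁆)]
    _ = ⁅nuL b, nuR b⁆ * ⁅nuL a, nuR a⁆ * (⁅nuL b, nuR a⁆ * ⁅nuL a, nuR b⁆) := by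
        rw [mul_assoc, e5]

lemma kComm (a b : G) :
    ⁅nuL (a * b), nuR (a * b)⁆ = ⁅nuL (b * a), nuR (b * a)⁆ := by
  have h := kConj a (b * a)
  rw [ccongr (show a * (b * a) * a⁻¹ = a * b by group)
    (show a * (b * a) * a⁻¹ = a * b by group)] at h
  exact h

lemma sSymm (a b : G) :
    ⁅nuL a, nuR b⁆ * ⁅nuL b, nuR a⁆ = ⁅nuL b, nuR a⁆ * ⁅nuL a, nuR b⁆ := by
  have h1 : ⁅nuL b, nuR b⁆ * ⁅nuL a, nuR a⁆ * (⁅nuL b, nuR a⁆ * ⁅nuL a, nuR b⁆)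
      = ⁅nuL b, nuR b⁆ * ⁅nuL a, nuR a⁆ * (⁅nuL a, nuR b⁆ * ⁅nuL b, nuR a⁆) := by
    calc ⁅nuL b, nuR b⁆ * ⁅nuL a, nuR a⁆ * (⁅nuL b, nuR a⁆ * ⁅nuL a, nuR b⁆)
        = ⁅nuL (a * b), nuR (a * b)⁆ := (kMul a b).symm
      _ = ⁅nuL (b * a), nuR (b * a)⁆ := kComm a b
      _ = ⁅nuL a, nuR a⁆ * ⁅nuL b, nuR b⁆ * (⁅nuL a, nuR b⁆ * ⁅nuL b, nuR a⁆) := kMul b a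
      _ = ⁅nuL b, nuR b⁆ * ⁅nuL a, nuR a⁆ * (⁅nuL a, nuR b⁆ * ⁅nuL b, nuR a⁆) := by
          rw [centerComm (kappaMemCenter b) (⁅nuL a, nuR a⁆)]
  have h2 := mul_left_cancel h1
  exact h2.symm ▸ h2

lemma cInvSnd (a : G) : ⁅nuL a, nuR a⁻¹⁆ = (⁅nuL a, nuR a⁆)⁻¹ := by
  have h := expandR a a a⁻¹
  rw [ccongr (rfl : a = a) (show a * a⁻¹ = (1 : G) by group), cOneSnd,
    ccongr (show a * a * a⁻¹ = a by group) (show a * a⁻¹ * a⁻¹ = a⁻¹ by group)] at h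
  exact (inv_eq_of_mul_eq_one_right h.symm).symm

lemma cInvFstDiag (a : G) : ⁅nuL a⁻¹, nuR a⁆ = (⁅nuL a, nuR a⁆)⁻¹ := by
  have h := expandL a a⁻¹ a
  rw [ccongr (show a * a⁻¹ = (1 : G) by group) (rfl : a = a), cOneFst,
    ccongr (show a * a⁻¹ * a⁻¹ = a⁻¹ by group) (show a * a * a⁻¹ = a by group)] at h
  exact eq_inv_of_mul_eq_one_left h.symm

lemma kInv (a : G) : ⁅nuL a⁻¹, nuR a⁻¹⁆ = ⁅nuL a, nuR a⁆ := by
  have h := kMul a a⁻¹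
  rw [ccongr (show a * a⁻¹ = (1 : G) by group) (show a * a⁻¹ = (1 : G) by group),
    cOneFst, cInvFstDiag, cInvSnd] at h
  have h2 := h.symm
  rw [show ⁅nuL a⁻¹, nuR a⁻¹⁆ * ⁅nuL a, nuR a⁆ *
      ((⁅nuL a, nuR a⁆)⁻¹ * (⁅nuL a, nuR a⁆)⁻¹)
      = ⁅nuL a⁻¹, nuR a⁻¹⁆ * (⁅nuL a, nuR a⁆)⁻¹ by group] at h2
  exact mul_inv_eq_one.mp h2

lemma sigma_rels :
    ∀ r ∈ nuRels G,
      FreeGroup.lift (Sum.elim (fun g : G => nuR g) (fun g : G => nuL g)) r = 1 := by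
  rintro r hr
  rcases hr with ((⟨g, h, rfl⟩ | ⟨g, h, rfl⟩) | ⟨g1, g2, g3, rfl⟩) | ⟨g1, g2, g3, rfl⟩ <;>
    simp only [map_mul, map_inv, map_commutatorElement, FreeGroup.lift_apply_of, Sum.elim_inl,
      Sum.elim_inr]
  · rw [mulR, mul_inv_cancel]
  · rw [mulL, mul_inv_cancel]
  · rw [inv_mul_eq_one,
      ← commutatorElement_inv (nuL (g3⁻¹ * g2 * g3)) (nuR (g3⁻¹ * g1 * g3)),
      ← conjR g2 g1 g3]
    simp only [commutatorElement_def]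
    group
  · rw [inv_mul_eq_one,
      ← commutatorElement_inv (nuL (g3⁻¹ * g2 * g3)) (nuR (g3⁻¹ * g1 * g3)),
      ← conjL g2 g1 g3]
    simp only [commutatorElement_def]
    group

/-- The swap automorphism of `ν(G)`. -/
def sigmaH : Nu G →* Nu G := PresentedGroup.toGroup sigma_rels

lemma sigma_nuL (g : G) : sigmaH (nuL g) = nuR g :=
  PresentedGroup.toGroup.of sigma_rels

lemma sigma_nuR (g : G) : sigmaH (nuR g) = nuL g :=
  PresentedGroup.toGroup.of sigma_rels

/-- mirror of `keyP`. -/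
lemma keyQ (g h k : G) :
    ⁅⁅nuR g, nuL h⁆, nuR k⁆ = ⁅nuR (g * h * g⁻¹ * h⁻¹), nuL k⁆ := by
  have h1 := congrArg sigmaH (keyP g h k)
  simpa only [map_commutatorElement, sigma_nuL, sigma_nuR] using h1

lemma cMirror (g h k : G) :
    ⁅nuL k, nuR (g * h * g⁻¹ * h⁻¹)⁆ =
      (⁅nuL (k * h * k⁻¹), nuR (k * g * k⁻¹)⁆)⁻¹ * ⁅nuL h, nuR g⁆ := by
  have h2 : ⁅nuL k, nuR (g * h * g⁻¹ * h⁻¹)⁆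
      = (⁅(⁅nuL h, nuR g⁆)⁻¹, nuR k⁆)⁻¹ := by
    rw [commutatorElement_inv (nuL h) (nuR g), keyQ g h k]
    exact (commutatorElement_inv _ _).symm
  rw [h2, ← sandR' k h g]
  simp only [commutatorElement_def]
  group

lemma genKappaOne (g h : G) :
    ⁅nuL (g * h * g⁻¹ * h⁻¹), nuR (g * h * g⁻¹ * h⁻¹)⁆ = 1 := by
  have hfix : ⁅nuL (g * h * g⁻¹ * h⁻¹ * g * (g * h * g⁻¹ * h⁻¹)⁻¹),
      nuR (g * h * g⁻¹ * h⁻¹ * h * (g * h * g⁻¹ * h⁻¹)⁻¹)⁆ = ⁅nuL g, nuR h⁆ := by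
    have h1 := conjC g h (g * h * g⁻¹ * h⁻¹ * g * (g * h * g⁻¹ * h⁻¹)⁻¹)
      (g * h * g⁻¹ * h⁻¹ * h * (g * h * g⁻¹ * h⁻¹)⁻¹)
    rw [ccongr
      (show (g*h*g⁻¹*h⁻¹)⁻¹ * (g * h * g⁻¹ * h⁻¹ * g * (g * h * g⁻¹ * h⁻¹)⁻¹) *
          (g*h*g⁻¹*h⁻¹) = g by group)
      (show (g*h*g⁻¹*h⁻¹)⁻¹ * (g * h * g⁻¹ * h⁻¹ * h * (g * h * g⁻¹ * h⁻¹)⁻¹) *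
          (g*h*g⁻¹*h⁻¹) = h by group)] at h1
    calc ⁅nuL (g * h * g⁻¹ * h⁻¹ * g * (g * h * g⁻¹ * h⁻¹)⁻¹),
          nuR (g * h * g⁻¹ * h⁻¹ * h * (g * h * g⁻¹ * h⁻¹)⁻¹)⁆
        = ⁅nuL g, nuR h⁆ *
            ((⁅nuL g, nuR h⁆)⁻¹ *
              ⁅nuL (g * h * g⁻¹ * h⁻¹ * g * (g * h * g⁻¹ * h⁻¹)⁻¹),
                nuR (g * h * g⁻¹ * h⁻¹ * h * (g * h * g⁻¹ * h⁻¹)⁻¹)⁆ *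
              ⁅nuL g, nuR h⁆) * (⁅nuL g, nuR h⁆)⁻¹ := by group
      _ = ⁅nuL g, nuR h⁆ * ⁅nuL g, nuR h⁆ * (⁅nuL g, nuR h⁆)⁻¹ := by rw [h1]
      _ = ⁅nuL g, nuR h⁆ := by group
  have h0 := keyP g h (g * h * g⁻¹ * h⁻¹)
  rw [← h0, commutatorElement_eq_one_iff_commute]
  have hcomm : nuL (g * h * g⁻¹ * h⁻¹) * ⁅nuL g, nuR h⁆
      = ⁅nuL g, nuR h⁆ * nuL (g * h * g⁻¹ * h⁻¹) := by
    have h3 := sandL' (g * h * g⁻¹ * h⁻¹) g h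
    rw [hfix] at h3
    calc nuL (g * h * g⁻¹ * h⁻¹) * ⁅nuL g, nuR h⁆
        = nuL (g * h * g⁻¹ * h⁻¹) * ⁅nuL g, nuR h⁆ * (nuL (g * h * g⁻¹ * h⁻¹))⁻¹ *
            nuL (g * h * g⁻¹ * h⁻¹) := by group
      _ = ⁅nuL g, nuR h⁆ * nuL (g * h * g⁻¹ * h⁻¹) := by rw [h3]
  exact hcomm.symm

lemma genSOne (g h a : G) :
    ⁅nuL a, nuR (g * h * g⁻¹ * h⁻¹)⁆ * ⁅nuL (g * h * g⁻¹ * h⁻¹), nuR a⁆ = 1 := by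
  have h1 := keyP g h a
  have h2 := cMirror g h a
  have h3 : ⁅⁅nuL g, nuR h⁆, nuL a⁆
      = ⁅nuL g, nuR h⁆ * (⁅nuL (a * g * a⁻¹), nuR (a * h * a⁻¹)⁆)⁻¹ := by
    rw [← sandL' a g h]; simp only [commutatorElement_def]; group
  rw [h2, ← h1, h3]
  have hS : ⁅nuL h, nuR g⁆ * ⁅nuL g, nuR h⁆ ∈ Subgroup.center (Nu G) := sMemCenter h g
  calc (⁅nuL (a * h * a⁻¹), nuR (a * g * a⁻¹)⁆)⁻¹ * ⁅nuL h, nuR g⁆ *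
        (⁅nuL g, nuR h⁆ * (⁅nuL (a * g * a⁻¹), nuR (a * h * a⁻¹)⁆)⁻¹)
      = (⁅nuL (a * h * a⁻¹), nuR (a * g * a⁻¹)⁆)⁻¹ *
          (⁅nuL h, nuR g⁆ * ⁅nuL g, nuR h⁆) *
          (⁅nuL (a * g * a⁻¹), nuR (a * h * a⁻¹)⁆)⁻¹ := by group
    _ = (⁅nuL h, nuR g⁆ * ⁅nuL g, nuR h⁆) *
          ((⁅nuL (a * h * a⁻¹), nuR (a * g * a⁻¹)⁆)⁻¹ *
            (⁅nuL (a * g * a⁻¹), nuR (a * h * a⁻¹)⁆)⁻¹) := by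
        rw [centerComm hS ((⁅nuL (a * h * a⁻¹), nuR (a * g * a⁻¹)⁆)⁻¹)]
        rw [mul_assoc]
    _ = (⁅nuL h, nuR g⁆ * ⁅nuL g, nuR h⁆) *
          (⁅nuL (a * g * a⁻¹), nuR (a * h * a⁻¹)⁆ *
            ⁅nuL (a * h * a⁻¹), nuR (a * g * a⁻¹)⁆)⁻¹ := by group
    _ = (⁅nuL h, nuR g⁆ * ⁅nuL g, nuR h⁆) * (⁅nuL g, nuR h⁆ * ⁅nuL h, nuR g⁆)⁻¹ := by
        rw [sConj a g h]
    _ = 1 := by rw [sSymm g h]; group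

lemma swapOne {u v : Nu G} (h : u * v = 1) : v * u = 1 := by
  have h2 := inv_eq_of_mul_eq_one_right h
  rw [← h2]
  exact inv_mul_cancel u

/-- Part (a). -/
lemma partA : ∀ w ∈ commutator G, ⁅nuL w, nuR w⁆ = 1 := by
  intro w hw
  rw [commutator_eq_closure] at hw
  refine (Subgroup.closure_induction
    (p := fun w _ => ⁅nuL w, nuR w⁆ = 1 ∧
      ∀ a : G, ⁅nuL a, nuR w⁆ * ⁅nuL w, nuR a⁆ = 1) ?_ ?_ ?_ ?_ hw).1
  · rintro x ⟨g, h, rfl⟩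
    rw [commutatorElement_def]
    exact ⟨genKappaOne g h, fun a => genSOne g h a⟩
  · refine ⟨cOneFst 1, fun a => ?_⟩
    rw [cOneSnd, cOneFst, one_mul]
  · rintro x y _ _ ⟨hx1, hx2⟩ ⟨hy1, hy2⟩
    have hk : ⁅nuL (x * y), nuR (x * y)⁆ = 1 := by
      have h := kMul x y
      rw [hy1, hx1, one_mul, one_mul, hx2 y] at h
      exact h
    refine ⟨hk, fun a => ?_⟩
    have e1 : ⁅nuL (a * x), nuR (a * x)⁆ = ⁅nuL a, nuR a⁆ := by
      have h := kMul a x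
      rw [hx1, one_mul, swapOne (hx2 a), mul_one] at h
      exact h
    have e2 : ⁅nuL (a * x * y), nuR (a * x * y)⁆ = ⁅nuL a, nuR a⁆ := by
      have h := kMul (a * x) y
      rw [hy1, one_mul, swapOne (hy2 (a * x)), mul_one, e1] at h
      exact h
    have e3 : ⁅nuL a, nuR a⁆
        = ⁅nuL a, nuR a⁆ * (⁅nuL (x * y), nuR a⁆ * ⁅nuL a, nuR (x * y)⁆) := by
      have h := kMul a (x * y)
      rw [hk, one_mul,
        ccongr (show a * (x * y) = a * x * y by group)
          (show a * (x * y) = a * x * y by group), e2] at h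
      exact h
    exact swapOne (left_eq_mul.mp e3)
  · rintro x _ ⟨hx1, hx2⟩
    refine ⟨by rw [kInv]; exact hx1, fun a => ?_⟩
    have e1 : ⁅nuL (a * x⁻¹), nuR (a * x⁻¹)⁆ = ⁅nuL a, nuR a⁆ := by
      have h := kMul (a * x⁻¹) x
      rw [hx1, one_mul, swapOne (hx2 (a * x⁻¹)), mul_one,
        ccongr (show a * x⁻¹ * x = a by group) (show a * x⁻¹ * x = a by group)] at h
      exact h.symm
    have e3 : ⁅nuL a, nuR a⁆
        = ⁅nuL a, nuR a⁆ * (⁅nuL x⁻¹, nuR a⁆ * ⁅nuL a, nuR x⁻¹⁆) := by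
      have h := kMul a x⁻¹
      rw [kInv, hx1, one_mul, e1] at h
      exact h
    exact swapOne (left_eq_mul.mp e3)

/-- general auxiliary lemma for part (d) -/
lemma zpowAux {H : Type*} [Group H] (A B : H)
    (hza : Commute ⁅A, B⁆ A) (hzb : Commute ⁅A, B⁆ B) (n : ℤ) :
    ⁅A ^ n, B⁆ = ⁅A, B⁆ ^ n ∧ ⁅A, B⁆ ^ n = ⁅A, B ^ n⁆ := by
  have hconj : A * B * A⁻¹ = ⁅A, B⁆ * B := by
    rw [commutatorElement_def]; group
  constructor
  · have key1 : ∀ m : ℤ, A ^ m * B * (A ^ m)⁻¹ = ⁅A, B⁆ ^ m * B := by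
      intro m
      induction m using Int.induction_on with
      | zero => simp
      | succ i ih =>
        have hcom : A ^ (i : ℤ) * ⁅A, B⁆ = ⁅A, B⁆ * A ^ (i : ℤ) :=
          ((hza.zpow_right (i : ℤ)).symm).eq
        calc A ^ ((i : ℤ) + 1) * B * (A ^ ((i : ℤ) + 1))⁻¹
            = A ^ (i : ℤ) * (A * B * A⁻¹) * (A ^ (i : ℤ))⁻¹ := by
              rw [zpow_add_one]; group
          _ = A ^ (i : ℤ) * (⁅A, B⁆ * B) * (A ^ (i : ℤ))⁻¹ := by rw [hconj]
          _ = (A ^ (i : ℤ) * ⁅A, B⁆) * B * (A ^ (i : ℤ))⁻¹ := by group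
          _ = (⁅A, B⁆ * A ^ (i : ℤ)) * B * (A ^ (i : ℤ))⁻¹ := by rw [hcom]
          _ = ⁅A, B⁆ * (A ^ (i : ℤ) * B * (A ^ (i : ℤ))⁻¹) := by group
          _ = ⁅A, B⁆ * (⁅A, B⁆ ^ (i : ℤ) * B) := by rw [ih]
          _ = ⁅A, B⁆ ^ ((i : ℤ) + 1) * B := by
              rw [show ((i : ℤ) + 1) = 1 + (i : ℤ) by omega, zpow_add, zpow_one,
                mul_assoc]
      | pred i ih =>
        have h7 : A⁻¹ * ⁅A, B⁆ = ⁅A, B⁆ * A⁻¹ := (hza.symm.inv_left).eq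
        have h8 : A⁻¹ * B * A = ⁅A, B⁆⁻¹ * B := by
          have h9 : ⁅A, B⁆ * (A⁻¹ * B * A) = B := by
            calc ⁅A, B⁆ * (A⁻¹ * B * A) = (⁅A, B⁆ * A⁻¹) * B * A := by group
              _ = (A⁻¹ * ⁅A, B⁆) * B * A := by rw [h7]
              _ = A⁻¹ * (⁅A, B⁆ * B) * A := by group
              _ = A⁻¹ * (A * B * A⁻¹) * A := by rw [hconj]
              _ = B := by group
          calc A⁻¹ * B * A = ⁅A, B⁆⁻¹ * (⁅A, B⁆ * (A⁻¹ * B * A)) := by group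
            _ = ⁅A, B⁆⁻¹ * B := by rw [h9]
        have h10 : A ^ (-(i : ℤ)) * ⁅A, B⁆⁻¹ = ⁅A, B⁆⁻¹ * A ^ (-(i : ℤ)) :=
          (((hza.inv_left).zpow_right (-(i : ℤ))).symm).eq
        calc A ^ (-(i : ℤ) - 1) * B * (A ^ (-(i : ℤ) - 1))⁻¹
            = A ^ (-(i : ℤ)) * (A⁻¹ * B * A) * (A ^ (-(i : ℤ)))⁻¹ := by
              rw [zpow_sub_one]; group
          _ = A ^ (-(i : ℤ)) * (⁅A, B⁆⁻¹ * B) * (A ^ (-(i : ℤ)))⁻¹ := by rw [h8]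
          _ = (A ^ (-(i : ℤ)) * ⁅A, B⁆⁻¹) * B * (A ^ (-(i : ℤ)))⁻¹ := by group
          _ = (⁅A, B⁆⁻¹ * A ^ (-(i : ℤ))) * B * (A ^ (-(i : ℤ)))⁻¹ := by rw [h10]
          _ = ⁅A, B⁆⁻¹ * (A ^ (-(i : ℤ)) * B * (A ^ (-(i : ℤ)))⁻¹) := by group
          _ = ⁅A, B⁆⁻¹ * (⁅A, B⁆ ^ (-(i : ℤ)) * B) := by rw [ih]
          _ = ⁅A, B⁆ ^ (-(i : ℤ) - 1) * B := by
              rw [show (-(i : ℤ) - 1) = (-1) + (-(i : ℤ)) by omega, zpow_add,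
                zpow_neg_one, mul_assoc]
    calc ⁅A ^ n, B⁆ = A ^ n * B * (A ^ n)⁻¹ * B⁻¹ := by
          rw [commutatorElement_def]
      _ = ⁅A, B⁆ ^ n * B * B⁻¹ := by rw [key1 n]
      _ = ⁅A, B⁆ ^ n := by group
  · have h11 : A * B ^ n * A⁻¹ = ⁅A, B⁆ ^ n * B ^ n := by
      calc A * B ^ n * A⁻¹ = (A * B * A⁻¹) ^ n := by rw [conj_zpow]
        _ = (⁅A, B⁆ * B) ^ n := by rw [hconj]
        _ = ⁅A, B⁆ ^ n * B ^ n := hzb.mul_zpow n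
    calc ⁅A, B⁆ ^ n = ⁅A, B⁆ ^ n * B ^ n * (B ^ n)⁻¹ := by group
      _ = A * B ^ n * A⁻¹ * (B ^ n)⁻¹ := by rw [h11]
      _ = ⁅A, B ^ n⁆ := by rw [commutatorElement_def]

/-- Part (d). -/
lemma partD (g₁ g₂ : G) (hc : ⁅g₁, g₂⁆ = 1) (n : ℤ) :
    ⁅nuL g₁ ^ n, nuR g₂⁆ = ⁅nuL g₁, nuR g₂⁆ ^ n ∧
      ⁅nuL g₁, nuR g₂⁆ ^ n = ⁅nuL g₁, nuR g₂ ^ n⁆ := by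
  have hG : g₁ * g₂ = g₂ * g₁ := (commutatorElement_eq_one_iff_commute.mp hc).eq
  have hza : Commute (⁅nuL g₁, nuR g₂⁆) (nuL g₁) := by
    have h1 := sandL g₁ g₁ g₂
    rw [ccongr (show g₁⁻¹ * g₁ * g₁ = g₁ by group)
      (show g₁⁻¹ * g₂ * g₁ = g₂ by rw [mul_assoc, ← hG, inv_mul_cancel_left])] at h1
    calc ⁅nuL g₁, nuR g₂⁆ * nuL g₁
        = nuL g₁ * ((nuL g₁)⁻¹ * ⁅nuL g₁, nuR g₂⁆ * nuL g₁) := by group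
      _ = nuL g₁ * ⁅nuL g₁, nuR g₂⁆ := by rw [h1]
  have hzb : Commute (⁅nuL g₁, nuR g₂⁆) (nuR g₂) := by
    have h1 := sandR g₂ g₁ g₂
    rw [ccongr (show g₂⁻¹ * g₁ * g₂ = g₁ by rw [mul_assoc, hG, inv_mul_cancel_left])
      (show g₂⁻¹ * g₂ * g₂ = g₂ by group)] at h1
    calc ⁅nuL g₁, nuR g₂⁆ * nuR g₂
        = nuR g₂ * ((nuR g₂)⁻¹ * ⁅nuL g₁, nuR g₂⁆ * nuR g₂) := by group
      _ = nuR g₂ * ⁅nuL g₁, nuR g₂⁆ := by rw [h1]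
  exact zpowAux (nuL g₁) (nuR g₂) hza hzb n

end NuAux

/-- Basic relations in Rocco's group `ν(G)`:
(a) `[g, g^φ] = 1` for `g ∈ G'`;
(b) `[g, g^φ]` is central in `ν(G)`;
(c) `[g₁, g₂^φ][g₂, g₁^φ]` is central in `ν(G)`;
(d) if `[g₁, g₂] = 1` then `[g₁ⁿ, g₂^φ] = [g₁, g₂^φ]ⁿ = [g₁, (g₂^φ)ⁿ]` for all `n : ℤ`. -/
theorem nu_relations (G : Type*) [Group G] :
    (∀ g ∈ commutator G, ⁅nuL g, nuR g⁆ = 1) ∧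
    (∀ g : G, ⁅nuL g, nuR g⁆ ∈ Subgroup.center (Nu G)) ∧
    (∀ g₁ g₂ : G, ⁅nuL g₁, nuR g₂⁆ * ⁅nuL g₂, nuR g₁⁆ ∈ Subgroup.center (Nu G)) ∧
    (∀ g₁ g₂ : G, ⁅g₁, g₂⁆ = 1 → ∀ n : ℤ,
      ⁅nuL g₁ ^ n, nuR g₂⁆ = ⁅nuL g₁, nuR g₂⁆ ^ n ∧
      ⁅nuL g₁, nuR g₂⁆ ^ n = ⁅nuL g₁, (nuR g₂) ^ n⁆) := by
  exact ⟨NuAux.partA, NuAux.kappaMemCenter, NuAux.sMemCenter,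
    fun g₁ g₂ hc n => NuAux.partD g₁ g₂ hc n⟩
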